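/- Let n ≥ 1. For every polynomial p in n real variables there exists a unique harmonic polynomial q in n variables (i.e., Δq = Σ_{i=1}^n ∂²q/∂x_i² = 0) such that p(x) = q(x) for all x on the unit sphere S^{n−1} = {x ∈ ℝ^n : x_1² + ⋯ + x_n² = 1}. Moreover, if deg p ≤ k then the harmonic representative q satisfies deg q ≤ k. -/

import Mathlib

open MvPolynomial

noncomputable section HarmAux

variable {n : ℕ}

/-- The formal Laplacian. -/
def hlap (f : MvPolynomial (Fin n) ℝ) : MvPolynomial (Fin n) ℝ :=
  ∑ i, pderiv i (pderiv i f)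

/-- The squared radius polynomial. -/
def hr2 (n : ℕ) : MvPolynomial (Fin n) ℝ := ∑ i, X i ^ 2

lemma hlap_add (f g : MvPolynomial (Fin n) ℝ) : hlap (f + g) = hlap f + hlap g := by
  simp [hlap, map_add, Finset.sum_add_distrib]

lemma hlap_sub (f g : MvPolynomial (Fin n) ℝ) : hlap (f - g) = hlap f - hlap g := by
  simp [hlap, map_sub, Finset.sum_sub_distrib]

lemma hlap_smul (c : ℝ) (f : MvPolynomial (Fin n) ℝ) : hlap (c • f) = c • hlap f := by
  simp [hlap, map_smul, Finset.smul_sum]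

lemma hlap_zero : hlap (0 : MvPolynomial (Fin n) ℝ) = 0 := by simp [hlap]

lemma eval_hr2 (x : Fin n → ℝ) : eval x (hr2 n) = ∑ i, x i ^ 2 := by
  simp [hr2]

lemma pderiv_hr2 (i : Fin n) : pderiv i (hr2 n) = 2 * X i := by
  rw [hr2, map_sum]
  rw [Finset.sum_eq_single i]
  · rw [pderiv_pow, pderiv_X_self]; ring
  · intro j _ hj
    rw [pderiv_pow, pderiv_X_of_ne hj]; ring
  · simp

lemma totalDegree_pderiv_le (i : Fin n) (f : MvPolynomial (Fin n) ℝ) :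
    (pderiv i f).totalDegree ≤ f.totalDegree - 1 := by
  classical
  conv_lhs => rw [f.as_sum, map_sum]
  apply totalDegree_finsetSum_le
  intro s hs
  rw [pderiv_monomial]
  rcases eq_or_ne (s i) 0 with h0 | h0
  · simp [h0]
  · refine (totalDegree_monomial_le _ _).trans ?_
    have key : (s - Finsupp.single i 1) + Finsupp.single i 1 = s := by
      ext j
      rcases eq_or_ne j i with rfl | hj
      · simp [Finsupp.single_apply]; omega
      · simp [Finsupp.single_apply, hj, Ne.symm hj]
    have h1 : ((s - Finsupp.single i 1).sum fun _ => id) + 1 = s.sum fun _ e => e := by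
      conv_rhs => rw [← key]
      rw [Finsupp.sum_add_index' (fun _ => rfl) (fun _ _ _ => rfl)]
      simp [Finsupp.sum_single_index]
      rfl
    have h2 : (s.sum fun _ e => e) ≤ f.totalDegree := le_totalDegree hs
    omega


lemma pderiv_eq_zero_of_totalDegree_eq_zero {f : MvPolynomial (Fin n) ℝ} (hf : f.totalDegree = 0)
    (i : Fin n) : pderiv i f = 0 := by
  classical
  conv_lhs => rw [f.as_sum, map_sum]
  apply Finset.sum_eq_zero
  intro s hs
  rw [pderiv_monomial]
  have := (totalDegree_eq_zero_iff (Fin n) f).mp hf s hs i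
  simp [this]

lemma hlap_eq_zero_of_totalDegree_le_one {f : MvPolynomial (Fin n) ℝ} (hf : f.totalDegree ≤ 1) :
    hlap f = 0 := by
  rw [hlap]
  apply Finset.sum_eq_zero
  intro i _
  have h1 : (pderiv i f).totalDegree = 0 := by
    have := totalDegree_pderiv_le i f
    omega
  exact pderiv_eq_zero_of_totalDegree_eq_zero h1 i

lemma degree_sub_single {s : Fin n →₀ ℕ} {i : Fin n} (h0 : s i ≠ 0) :
    (s - Finsupp.single i 1).degree + 1 = s.degree := by
  have key : (s - Finsupp.single i 1) + Finsupp.single i 1 = s := by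
    ext j
    rcases eq_or_ne j i with rfl | hj
    · simp [Finsupp.single_apply]; omega
    · simp [Finsupp.single_apply, hj, Ne.symm hj]
  have h1 : (Finsupp.single i 1).degree = 1 := by
    simp [Finsupp.degree_apply, Finsupp.support_single_ne_zero i one_ne_zero]
  conv_rhs => rw [← key]
  simp_rw [Finsupp.degree_eq_weight_one] at h1 ⊢
  rw [map_add, h1]

lemma isHomogeneous_pderiv {f : MvPolynomial (Fin n) ℝ} {d : ℕ} (hf : f.IsHomogeneous d)
    (i : Fin n) : (pderiv i f).IsHomogeneous (d - 1) := by
  classical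
  conv in pderiv i f => rw [f.as_sum]
  rw [map_sum]
  apply IsHomogeneous.sum
  intro s hs
  rw [pderiv_monomial]
  rcases eq_or_ne (s i) 0 with h0 | h0
  · simp [h0, isHomogeneous_zero]
  · apply isHomogeneous_monomial
    have hdeg : s.degree = d := by
      rw [Finsupp.degree_eq_weight_one]; exact hf (mem_support_iff.mp hs)
    have := degree_sub_single h0
    omega

lemma isHomogeneous_hlap {f : MvPolynomial (Fin n) ℝ} {d : ℕ} (hf : f.IsHomogeneous d) :
    (hlap f).IsHomogeneous (d - 2) := by
  rw [hlap]
  apply IsHomogeneous.sum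
  intro i _
  have := isHomogeneous_pderiv (isHomogeneous_pderiv hf i) i
  rwa [Nat.sub_sub] at this

lemma euler_identity {f : MvPolynomial (Fin n) ℝ} {d : ℕ} (hf : f.IsHomogeneous d) :
    ∑ i, X i * pderiv i f = d • f := by
  classical
  conv_lhs => rw [f.as_sum]
  conv_rhs => rw [f.as_sum]
  simp only [map_sum, Finset.mul_sum, Finset.smul_sum]
  rw [Finset.sum_comm]
  apply Finset.sum_congr rfl
  intro s hs
  have hdeg : s.degree = d := by
    rw [Finsupp.degree_eq_weight_one]; exact hf (mem_support_iff.mp hs)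
  have step : ∀ i : Fin n, X i * pderiv i (monomial s (coeff s f)) =
      monomial s ((s i : ℝ) * coeff s f) := by
    intro i
    rw [pderiv_monomial]
    rcases eq_or_ne (s i) 0 with h0 | h0
    · simp [h0]
    · have key : (s - Finsupp.single i 1) + Finsupp.single i 1 = s := by
        ext j
        rcases eq_or_ne j i with rfl | hj
        · simp [Finsupp.single_apply]; omega
        · simp [Finsupp.single_apply, hj, Ne.symm hj]
      rw [X, monomial_mul, add_comm, key, one_mul, mul_comm]
  simp only [step]
  rw [← map_sum (monomial s)]
  have hsum : ∑ i, (s i : ℝ) * coeff s f = (d : ℝ) * coeff s f := by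
    rw [← Finset.sum_mul]
    congr 1
    rw [← Nat.cast_sum]
    congr 1
    rw [← hdeg, Finsupp.degree_apply]
    exact (Finset.sum_subset (Finset.subset_univ _) (by
      intro x _ hx
      simpa using Finsupp.notMem_support_iff.mp hx)).symm
  rw [hsum]
  rw [smul_monomial, nsmul_eq_mul]


lemma hlap_r2_mul {f : MvPolynomial (Fin n) ℝ} {d : ℕ} (hf : f.IsHomogeneous d) :
    hlap (hr2 n * f) = hr2 n * hlap f + ((2 * n + 4 * d) : ℕ) • f := by
  have expand : ∀ i : Fin n, pderiv i (pderiv i (hr2 n * f)) =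
      2 * f + 4 * (X i * pderiv i f) + hr2 n * pderiv i (pderiv i f) := by
    intro i
    have h2 : pderiv i (2 : MvPolynomial (Fin n) ℝ) = 0 := by
      rw [← map_ofNat (C : ℝ →+* MvPolynomial (Fin n) ℝ) 2, pderiv_C]
    simp only [pderiv_mul, pderiv_hr2, map_add, h2, pderiv_X_self]
    ring
  rw [hlap]
  simp only [expand]
  rw [Finset.sum_add_distrib, Finset.sum_add_distrib]
  rw [Finset.sum_const, Finset.card_univ, Fintype.card_fin]
  rw [← Finset.mul_sum, ← Finset.mul_sum, euler_identity hf, ← hlap]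
  simp only [nsmul_eq_mul, Nat.cast_mul, Nat.cast_add, Nat.cast_ofNat]
  ring

lemma hlap_C_mul (a : ℝ) (f : MvPolynomial (Fin n) ℝ) : hlap (C a * f) = C a * hlap f := by
  simp [hlap, pderiv_C_mul, Finset.mul_sum]

lemma hlap_neg (f : MvPolynomial (Fin n) ℝ) : hlap (-f) = -hlap f := by
  simp [hlap, Finset.sum_neg_distrib]

lemma totalDegree_hlap_le (f : MvPolynomial (Fin n) ℝ) :
    (hlap f).totalDegree ≤ f.totalDegree - 2 := by
  rw [hlap]
  apply totalDegree_finsetSum_le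
  intro i _
  have h1 := totalDegree_pderiv_le i (pderiv i f)
  have h2 := totalDegree_pderiv_le i f
  omega

lemma isHomogeneous_hr2 : (hr2 n).IsHomogeneous 2 := by
  rw [hr2]
  apply IsHomogeneous.sum
  intro i _
  simpa using (isHomogeneous_X ℝ i).pow 2

/-- Key eigenvalue induction: a homogeneous `f` with `r² Δf = -c f`, `c > 0`, is zero. -/
lemma eigen_zero (hn : 1 ≤ n) : ∀ d : ℕ, ∀ f : MvPolynomial (Fin n) ℝ, f.IsHomogeneous d →
    ∀ c : ℝ, 0 < c → hr2 n * hlap f = -(C c * f) → f = 0 := by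
  intro d
  induction d using Nat.strong_induction_on with
  | _ d IH =>
    intro f hf c hc heq
    have hg0 : hlap f = 0 := by
      rcases le_or_gt d 1 with hd | hd
      · exact hlap_eq_zero_of_totalDegree_le_one (hf.totalDegree_le.trans hd)
      · -- apply hlap to both sides
        set g := hlap f with hgdef
        have hg : g.IsHomogeneous (d - 2) := isHomogeneous_hlap hf
        have happ : hlap (hr2 n * g) = -(C c * g) := by
          rw [heq, hlap_neg, hlap_C_mul]
        rw [hlap_r2_mul hg] at happ
        have hsm : ((2 * n + 4 * (d - 2)) : ℕ) • g
            = C ((2 * n + 4 * (d - 2) : ℕ) : ℝ) * g := by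
          rw [nsmul_eq_mul]
          norm_cast
        rw [hsm] at happ
        have heq2 : hr2 n * hlap g = -(C (c + ((2 * n + 4 * (d - 2) : ℕ) : ℝ)) * g) := by
          rw [map_add]
          linear_combination happ
        exact IH (d - 2) (by omega) g hg _ (by positivity) heq2
    rw [hg0, mul_zero] at heq
    have hcf : C c * f = 0 := by linear_combination heq
    rcases mul_eq_zero.mp hcf with h | h
    · exact absurd h (by simp [hc.ne'])
    · exact h


lemma eigen_zero' (hn : 1 ≤ n) {d : ℕ} {f : MvPolynomial (Fin n) ℝ} (hf : f.IsHomogeneous d)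
    (h : hlap (hr2 n * f) = 0) : f = 0 := by
  rw [hlap_r2_mul hf] at h
  refine eigen_zero hn d f hf ((2 * n + 4 * d : ℕ) : ℝ) (by positivity) ?_
  have hsm : ((2 * n + 4 * d) : ℕ) • f = C ((2 * n + 4 * d : ℕ) : ℝ) * f := by
    rw [nsmul_eq_mul]; norm_cast
  rw [hsm] at h
  linear_combination h

lemma hlap_sum {ι : Type*} (s : Finset ι) (f : ι → MvPolynomial (Fin n) ℝ) :
    hlap (∑ j ∈ s, f j) = ∑ j ∈ s, hlap (f j) := by
  simp only [hlap, map_sum]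
  exact Finset.sum_comm

lemma top_component_ne_zero {g : MvPolynomial (Fin n) ℝ} (hg : g ≠ 0) :
    homogeneousComponent g.totalDegree g ≠ 0 := by
  classical
  have hsupp : g.support.Nonempty := support_nonempty.mpr hg
  obtain ⟨s, hs, hdeg⟩ := Finset.exists_mem_eq_sup _ hsupp (fun s => s.sum fun _ e => e)
  intro hzero
  have hc : coeff s (homogeneousComponent g.totalDegree g) = coeff s g := by
    rw [coeff_homogeneousComponent]
    rw [if_pos]
    rw [MvPolynomial.totalDegree, hdeg]
    simp [Finsupp.degree_apply, Finsupp.sum]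
  rw [hzero, coeff_zero] at hc
  exact mem_support_iff.mp hs hc.symm

lemma r2_sub_one_factor_zero (hn : 1 ≤ n) {g : MvPolynomial (Fin n) ℝ}
    (h : hlap ((hr2 n - 1) * g) = 0) : g = 0 := by
  classical
  by_contra hg
  set D := g.totalDegree with hD
  have hexp : hlap (hr2 n * g) = hlap g := by
    have h' : (hr2 n - 1) * g = hr2 n * g - g := by ring
    rw [h', hlap_sub] at h
    exact sub_eq_zero.mp h
  -- component D of both sides
  have hsum : hr2 n * g = ∑ k ∈ Finset.range (D + 1), hr2 n * homogeneousComponent k g := by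
    rw [← Finset.mul_sum, sum_homogeneousComponent]
  have hLHS : homogeneousComponent D (hlap (hr2 n * g))
      = hlap (hr2 n * homogeneousComponent D g) := by
    rw [hsum, hlap_sum, map_sum]
    have heach : ∀ k ∈ Finset.range (D + 1),
        homogeneousComponent D (hlap (hr2 n * homogeneousComponent k g))
        = if k = D then hlap (hr2 n * homogeneousComponent D g) else 0 := by
      intro k _
      have hhom : (hlap (hr2 n * homogeneousComponent k g)).IsHomogeneous k := by
        have h1 : (hr2 n * homogeneousComponent k g).IsHomogeneous (2 + k) :=
          isHomogeneous_hr2.mul (homogeneousComponent_isHomogeneous k g)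
        have h2 := isHomogeneous_hlap h1
        simpa using h2
      rw [homogeneousComponent_of_mem hhom]
      by_cases hk : k = D
      · subst hk; simp
      · simp [hk, Ne.symm hk]
    rw [Finset.sum_congr rfl heach, Finset.sum_ite_eq' _ D]
    simp
  have hRHS : homogeneousComponent D (hlap g) = 0 := by
    rcases Nat.eq_zero_or_pos D with h0 | hpos
    · rw [hlap_eq_zero_of_totalDegree_le_one (by omega), map_zero]
    · apply homogeneousComponent_eq_zero
      have := totalDegree_hlap_le g
      omega
  rw [hexp, hRHS] at hLHS
  have hcomp0 : homogeneousComponent D g = 0 :=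
    eigen_zero' hn (homogeneousComponent_isHomogeneous D g) hLHS.symm
  exact top_component_ne_zero hg hcomp0


lemma sum_univ_eq_degree (s : Fin n →₀ ℕ) : ∑ i, s i = s.degree := by
  rw [Finsupp.degree_apply]
  exact (Finset.sum_subset (Finset.subset_univ _) (by
    intro x _ hx
    simpa using Finsupp.notMem_support_iff.mp hx)).symm

lemma eval_homog_smul {f : MvPolynomial (Fin n) ℝ} {d : ℕ} (hf : f.IsHomogeneous d)
    (t : ℝ) (x : Fin n → ℝ) :
    eval (fun i => t * x i) f = t ^ d * eval x f := by
  rw [eval_eq' , eval_eq', Finset.mul_sum]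
  apply Finset.sum_congr rfl
  intro s hs
  have hdeg : s.degree = d := by
    rw [Finsupp.degree_eq_weight_one]; exact hf (mem_support_iff.mp hs)
  simp only [mul_pow]
  rw [Finset.prod_mul_distrib, Finset.prod_pow_eq_pow_sum]
  rw [sum_univ_eq_degree, hdeg]
  ring

/-- A polynomial vanishing on the open unit ball is zero. -/
lemma eq_zero_of_vanish_ball {f : MvPolynomial (Fin n) ℝ}
    (h : ∀ x : Fin n → ℝ, ∑ i, x i ^ 2 < 1 → eval x f = 0) : f = 0 := by
  classical
  have hcomp : ∀ k, ∀ u : Fin n → ℝ, eval u (homogeneousComponent k f) = 0 := by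
    intro k u
    set D := f.totalDegree with hD
    set P : Polynomial ℝ :=
      ∑ j ∈ Finset.range (D + 1), Polynomial.C (eval u (homogeneousComponent j f))
        * Polynomial.X ^ j with hP
    set S : ℝ := ∑ i, u i ^ 2 with hS
    have hSnn : 0 ≤ S := Finset.sum_nonneg fun i _ => sq_nonneg _
    set ε : ℝ := min 1 (1 / (S + 1)) with hε
    have hεpos : 0 < ε := lt_min one_pos (by positivity)
    have hroot : ∀ t ∈ Set.Ioo (0 : ℝ) ε, Polynomial.IsRoot P t := by
      intro t ht
      have ht0 : 0 < t := ht.1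
      have htε : t < ε := ht.2
      have hball : ∑ i, (t * u i) ^ 2 < 1 := by
        have h1 : ∑ i, (t * u i) ^ 2 = t ^ 2 * S := by
          rw [hS, Finset.mul_sum]
          apply Finset.sum_congr rfl
          intro i _
          ring
        rw [h1]
        have ht1 : t ≤ 1 := le_of_lt (lt_of_lt_of_le htε (min_le_left _ _))
        have ht2 : t < 1 / (S + 1) := lt_of_lt_of_le htε (min_le_right _ _)
        have ht2' : t * (S + 1) < 1 := by
          rw [lt_div_iff₀ (by positivity : (0:ℝ) < S + 1)] at ht2
          exact ht2
        nlinarith [mul_nonneg (mul_nonneg ht0.le (sub_nonneg.mpr ht1)) hSnn]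
      have hev : eval (fun i => t * u i) f = 0 := h _ hball
      have hexpand : eval (fun i => t * u i) f = Polynomial.eval t P := by
        conv_lhs => rw [← sum_homogeneousComponent f, map_sum]
        rw [hP]
        rw [Polynomial.eval_finset_sum]
        apply Finset.sum_congr rfl
        intro j _
        rw [Polynomial.eval_mul, Polynomial.eval_C, Polynomial.eval_pow, Polynomial.eval_X]
        rw [eval_homog_smul (homogeneousComponent_isHomogeneous j f)]
        ring
      rw [Polynomial.IsRoot, ← hexpand]
      exact hev
    have hPzero : P = 0 :=
      Polynomial.eq_zero_of_infinite_isRoot P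
        ((Set.infinite_coe_iff.mp (Set.Ioo.infinite hεpos)).mono
          (fun t ht => hroot t ht))
    rcases le_or_gt k D with hk | hk
    · have := congrArg (fun Q => Polynomial.coeff Q k) hPzero
      simp only [hP, Polynomial.finset_sum_coeff, Polynomial.coeff_C_mul,
        Polynomial.coeff_X_pow, Polynomial.coeff_zero, mul_ite, mul_one, mul_zero,
        Finset.sum_ite_eq, Finset.sum_ite_eq', Finset.mem_range] at this
      rw [if_pos (by omega : k < D + 1)] at this
      exact this
    · rw [homogeneousComponent_eq_zero _ _ hk, map_zero]
  have hcompz : ∀ k, homogeneousComponent k f = 0 := by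
    intro k
    apply MvPolynomial.funext
    intro x
    rw [hcomp k x, map_zero]
  conv_lhs => rw [← sum_homogeneousComponent f]
  rw [Finset.sum_congr rfl (fun k _ => hcompz k), Finset.sum_const_zero]


lemma sphere_vanish_factor {m : ℕ} {h : MvPolynomial (Fin (m + 1)) ℝ}
    (hvan : ∀ x : Fin (m + 1) → ℝ, ∑ i, x i ^ 2 = 1 → eval x h = 0) :
    ∃ g : MvPolynomial (Fin (m + 1)) ℝ, h = (hr2 (m + 1) - 1) * g := by
  classical
  set φ := MvPolynomial.finSuccEquiv ℝ m with hφ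
  set S : Polynomial (MvPolynomial (Fin m) ℝ) := φ (hr2 (m + 1) - 1) with hSdef
  have hSform : S = Polynomial.X ^ 2 + Polynomial.C (hr2 m - 1) := by
    rw [hSdef, hφ]
    rw [map_sub, map_one, hr2, map_sum, Fin.sum_univ_succ]
    simp only [map_pow, finSuccEquiv_X_zero, finSuccEquiv_X_succ]
    rw [hr2]
    push_cast [map_sub, map_one, map_sum, map_pow]
    ring
  have hSmonic : S.Monic := by
    rw [hSform]
    exact Polynomial.monic_X_pow_add (by
      apply lt_of_le_of_lt (Polynomial.degree_C_le)
      norm_num)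
  set B := (φ h) %ₘ S with hB
  set Q := (φ h) /ₘ S with hQ
  have hdiv : φ h = S * Q + B := by
    have hmd := Polynomial.modByMonic_add_div (φ h) S
    rw [hB, hQ]
    linear_combination -hmd
  have hdS : S.degree = 2 := by
    rw [hSform]
    exact Polynomial.degree_X_pow_add_C (by norm_num) _
  have hdegB : B.degree < 2 := by
    have hlt := Polynomial.degree_modByMonic_lt (φ h) hSmonic
    rw [hdS] at hlt
    exact hlt
  -- evaluate on sphere points
  have hcoeff : ∀ x' : Fin m → ℝ, ∀ y : ℝ, y ^ 2 + ∑ i, x' i ^ 2 = 1 →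
      eval x' (B.coeff 0) + eval x' (B.coeff 1) * y = 0 := by
    intro x' y hxy
    have hsphere : ∑ i, (Fin.cons y x' : Fin (m+1) → ℝ) i ^ 2 = 1 := by
      rw [Fin.sum_univ_succ]
      simpa using hxy
    have h0 := hvan _ hsphere
    rw [eval_eq_eval_mv_eval'] at h0
    rw [hdiv] at h0
    rw [Polynomial.map_add, Polynomial.map_mul, Polynomial.eval_add, Polynomial.eval_mul] at h0
    have hSeval : Polynomial.eval y (Polynomial.map (eval x') S) = 0 := by
      rw [hSform]
      simp only [Polynomial.map_add, Polynomial.map_pow, Polynomial.map_X, Polynomial.map_C,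
        Polynomial.eval_add, Polynomial.eval_pow, Polynomial.eval_X, Polynomial.eval_C]
      rw [map_sub, map_one, eval_hr2]
      linarith
    rw [hSeval, zero_mul, zero_add] at h0
    -- expand eval of B.map using degree < 2
    have hBev : Polynomial.eval y (Polynomial.map (eval x') B) =
        eval x' (B.coeff 0) + eval x' (B.coeff 1) * y := by
      have hdegmap : (Polynomial.map (eval x') B).degree < 2 :=
        lt_of_le_of_lt Polynomial.degree_map_le hdegB
      have hnd : (Polynomial.map (eval x') B).natDegree < 2 := by
        rcases eq_or_ne (Polynomial.map (eval x') B) 0 with h' | h'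
        · simp [h']
        · exact Polynomial.natDegree_lt_iff_degree_lt h' |>.mpr hdegmap
      rw [Polynomial.eval_eq_sum_range' hnd]
      rw [Finset.sum_range_succ, Finset.sum_range_one]
      simp only [Polynomial.coeff_map, pow_zero, mul_one, pow_one]
    rw [hBev] at h0
    exact h0
  have hb1 : B.coeff 1 = 0 := by
    apply eq_zero_of_vanish_ball
    intro x' hx'
    set y := Real.sqrt (1 - ∑ i, x' i ^ 2) with hy
    have hy2 : y ^ 2 = 1 - ∑ i, x' i ^ 2 := Real.sq_sqrt (by linarith)
    have hypos : 0 < y := Real.sqrt_pos.mpr (by linarith)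
    have e1 := hcoeff x' y (by linarith)
    have e2 := hcoeff x' (-y) (by rw [neg_pow]; simpa using (by linarith : y^2 + ∑ i, x' i ^2 = 1))
    have : eval x' (B.coeff 1) * y = 0 := by linarith
    rcases mul_eq_zero.mp this with h' | h'
    · exact h'
    · exact absurd h' hypos.ne'
  have hb0 : B.coeff 0 = 0 := by
    apply eq_zero_of_vanish_ball
    intro x' hx'
    set y := Real.sqrt (1 - ∑ i, x' i ^ 2) with hy
    have hy2 : y ^ 2 = 1 - ∑ i, x' i ^ 2 := Real.sq_sqrt (by linarith)
    have e1 := hcoeff x' y (by linarith)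
    rw [hb1, map_zero, zero_mul, add_zero] at e1
    exact e1
  have hBzero : B = 0 := by
    apply Polynomial.ext
    intro k
    rw [Polynomial.coeff_zero]
    rcases lt_or_ge k 2 with hk | hk
    · interval_cases k
      · exact hb0
      · exact hb1
    · exact Polynomial.coeff_eq_zero_of_degree_lt
        (lt_of_lt_of_le hdegB (by exact_mod_cast Nat.cast_le.mpr hk))
  refine ⟨φ.symm Q, ?_⟩
  have : φ h = φ ((hr2 (m+1) - 1) * φ.symm Q) := by
    rw [map_mul, AlgEquiv.apply_symm_apply, ← hSdef, hdiv, hBzero, add_zero]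
  exact φ.injective this


lemma totalDegree_hr2_sub_one_le : (hr2 n - 1).totalDegree ≤ 2 := by
  apply (totalDegree_sub _ _).trans
  simp only [totalDegree_one, max_le_iff]
  constructor
  · rw [hr2]
    apply totalDegree_finsetSum_le
    intro i _
    exact (totalDegree_pow _ _).trans (by simp [totalDegree_X])
  · omega

/-- Uniqueness: two harmonic polynomials agreeing on the sphere are equal. -/
lemma harmonic_sphere_unique {m : ℕ} {q q' : MvPolynomial (Fin (m + 1)) ℝ}
    (hq : hlap q = 0) (hq' : hlap q' = 0)
    (hagree : ∀ x : Fin (m + 1) → ℝ, ∑ i, x i ^ 2 = 1 → eval x q = eval x q') : q = q' := by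
  have hvan : ∀ x : Fin (m + 1) → ℝ, ∑ i, x i ^ 2 = 1 → eval x (q - q') = 0 := by
    intro x hx
    rw [map_sub, hagree x hx, sub_self]
  obtain ⟨g, hg⟩ := sphere_vanish_factor hvan
  have hzero : hlap ((hr2 (m + 1) - 1) * g) = 0 := by
    rw [← hg, hlap_sub, hq, hq', sub_self]
  have := r2_sub_one_factor_zero (by omega) hzero
  rw [this, mul_zero] at hg
  exact sub_eq_zero.mp hg

/-- The map `g ↦ Δ((r² - 1)g)` on polynomials of degree at most `m`. -/
def hLmap (n m : ℕ) : restrictTotalDegree (Fin n) ℝ m →ₗ[ℝ] restrictTotalDegree (Fin n) ℝ m where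
  toFun g := ⟨hlap ((hr2 n - 1) * g.1), by
    rw [mem_restrictTotalDegree]
    have h1 := totalDegree_hlap_le ((hr2 n - 1) * g.1)
    have h2 := totalDegree_mul (hr2 n - 1) g.1
    have h3 := totalDegree_hr2_sub_one_le (n := n)
    have h4 := (mem_restrictTotalDegree (Fin n) m g.1).mp g.2
    omega⟩
  map_add' g₁ g₂ := by
    apply Subtype.ext
    simp only [Submodule.coe_add]
    rw [mul_add, hlap_add]
  map_smul' c g := by
    apply Subtype.ext
    simp only [SetLike.val_smul, RingHom.id_apply]
    rw [mul_smul_comm, hlap_smul]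

lemma hLmap_surjective (hn : 1 ≤ n) (m : ℕ) : Function.Surjective (hLmap n m) := by
  have hker : ∀ g : restrictTotalDegree (Fin n) ℝ m, hLmap n m g = 0 → g = 0 := by
    intro g hg
    have hval : hlap ((hr2 n - 1) * g.1) = 0 := congrArg Subtype.val hg
    exact Subtype.ext (r2_sub_one_factor_zero hn hval)
  have hinj : Function.Injective (hLmap n m) :=
    LinearMap.ker_eq_bot.mp (LinearMap.ker_eq_bot'.mpr hker)
  exact (LinearMap.injective_iff_surjective).mp hinj

end HarmAux

/-- Every polynomial on ℝⁿ agrees on the unit sphere with a unique harmonic polynomial,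
and the harmonic representative has total degree at most that of the original
polynomial. -/
theorem exists_unique_harmonic_representative (n : ℕ) (hn : 1 ≤ n)
    (p : MvPolynomial (Fin n) ℝ) :
    ∃ q : MvPolynomial (Fin n) ℝ,
      (∑ i, MvPolynomial.pderiv i (MvPolynomial.pderiv i q) = 0) ∧
      (∀ x : Fin n → ℝ, ∑ i, x i ^ 2 = 1 →
        MvPolynomial.eval x p = MvPolynomial.eval x q) ∧
      q.totalDegree ≤ p.totalDegree ∧
      ∀ q' : MvPolynomial (Fin n) ℝ,
        (∑ i, MvPolynomial.pderiv i (MvPolynomial.pderiv i q') = 0) →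
        (∀ x : Fin n → ℝ, ∑ i, x i ^ 2 = 1 →
          MvPolynomial.eval x p = MvPolynomial.eval x q') →
        q' = q := by
  obtain ⟨m', rfl⟩ : ∃ m', n = m' + 1 := ⟨n - 1, by omega⟩
  -- Find a suitable q
  have main : ∃ q : MvPolynomial (Fin (m' + 1)) ℝ, hlap q = 0 ∧
      (∀ x : Fin (m' + 1) → ℝ, ∑ i, x i ^ 2 = 1 → eval x p = eval x q) ∧
      q.totalDegree ≤ p.totalDegree := by
    rcases le_or_gt p.totalDegree 1 with hk | hk
    · exact ⟨p, hlap_eq_zero_of_totalDegree_le_one hk, fun x _ => rfl, le_refl _⟩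
    · set k := p.totalDegree with hkdef
      set m := k - 2 with hmdef
      have hmem : hlap p ∈ restrictTotalDegree (Fin (m' + 1)) ℝ m := by
        rw [mem_restrictTotalDegree]
        have := totalDegree_hlap_le p
        omega
      obtain ⟨g, hg⟩ := hLmap_surjective (n := m' + 1) (by omega) m ⟨hlap p, hmem⟩
      have hgval : hlap ((hr2 (m' + 1) - 1) * g.1) = hlap p := congrArg Subtype.val hg
      refine ⟨p - (hr2 (m' + 1) - 1) * g.1, ?_, ?_, ?_⟩
      · rw [hlap_sub, hgval, sub_self]
      · intro x hx
        rw [map_sub, map_mul, map_sub, map_one, eval_hr2, hx, sub_self, zero_mul, sub_zero]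
      · apply (totalDegree_sub _ _).trans
        have h2 := totalDegree_mul (hr2 (m' + 1) - 1) g.1
        have h3 := totalDegree_hr2_sub_one_le (n := m' + 1)
        have h4 := (mem_restrictTotalDegree (Fin (m' + 1)) m g.1).mp g.2
        omega
  obtain ⟨q, hharm, hagree, hdeg⟩ := main
  refine ⟨q, hharm, hagree, hdeg, ?_⟩
  intro q' hharm' hagree'
  exact harmonic_sphere_unique (hharm' : hlap q' = 0) hharm
    (fun x hx => by rw [← hagree' x hx, ← hagree x hx])
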